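/- Let g, W : ℝⁿ → ℝ with g nonnegative and locally Lipschitz continuous, and W convex with superlinear growth (W(x)/‖x‖ → +∞ as ‖x‖ → +∞). Then for almost every (h, x) ∈ (0, ∞) × ℝⁿ, the Hamilton–Jacobi equation holds: ∂_h Q_h^W(g)(x) = −W*(∇_x Q_h^W(g)(x)). -/

import Mathlib

open Filter MeasureTheory Bornology RealInnerProductSpace

section Aux

open Filter MeasureTheory Bornology RealInnerProductSpace Metric Set Topology

namespace QHJ

variable {n : ℕ} {g W : EuclideanSpace ℝ (Fin n) → ℝ}

local notation "E" => EuclideanSpace ℝ (Fin n)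

/-- The Hopf–Lax type infimum as a function of the pair `(h, x)`. -/
noncomputable def QQ (g W : E → ℝ) (p : ℝ × E) : ℝ :=
  ⨅ y : E, g (p.2 - p.1 • y) + p.1 * W y

section Basic


/-- Superlinear growth: for every `c` there is `R ≥ 1` beyond which `W y ≥ c ‖y‖`. -/
lemma growth (hW_super : Tendsto (fun x : E => W x / ‖x‖) (cocompact E) atTop)
    (c : ℝ) : ∃ R : ℝ, 1 ≤ R ∧ ∀ y : E, R ≤ ‖y‖ → c * ‖y‖ ≤ W y := by
  have h1 : ∀ᶠ y : E in cocompact E, c ≤ W y / ‖y‖ := hW_super.eventually_ge_atTop c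
  rw [hasBasis_cocompact.eventually_iff] at h1
  obtain ⟨s, hs, hsub⟩ := h1
  obtain ⟨R₀, hR₀⟩ := hs.isBounded.subset_closedBall 0
  refine ⟨max (R₀ + 1) 1, le_max_right _ _, fun y hy => ?_⟩
  have hynorm : 0 < ‖y‖ := lt_of_lt_of_le one_pos ((le_max_right _ _).trans hy)
  have hys : y ∉ s := by
    intro hmem
    have := hR₀ hmem
    simp only [mem_closedBall, dist_zero_right] at this
    have : ‖y‖ ≤ R₀ := this
    have h2 : R₀ + 1 ≤ ‖y‖ := (le_max_left _ _).trans hy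
    linarith
  have := hsub hys
  calc c * ‖y‖ ≤ (W y / ‖y‖) * ‖y‖ := by
        apply mul_le_mul_of_nonneg_right this hynorm.le
    _ = W y := div_mul_cancel₀ _ hynorm.ne'

/-- `W` is continuous. -/
lemma W_cont (hW_conv : ConvexOn ℝ Set.univ W) : Continuous W :=
  continuousOn_univ.1 (hW_conv.continuousOn isOpen_univ)

/-- `W` is bounded below. -/
lemma W_lb (hW_conv : ConvexOn ℝ Set.univ W)
    (hW_super : Tendsto (fun x : E => W x / ‖x‖) (cocompact E) atTop) :
    ∃ m : ℝ, m ≤ 0 ∧ ∀ y : E, m ≤ W y := by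
  obtain ⟨R, hR1, hR⟩ := growth hW_super 0
  have hcpt : IsCompact (closedBall (0 : E) R) := isCompact_closedBall _ _
  obtain ⟨m₀, hm₀⟩ := (hcpt.image_of_continuousOn ((W_cont hW_conv).continuousOn : ContinuousOn W (closedBall (0:E) R))).bddBelow
  refine ⟨min m₀ 0, min_le_right _ _, fun y => ?_⟩
  rcases le_or_gt ‖y‖ R with hy | hy
  · exact (min_le_left _ _).trans (hm₀ ⟨y, by simpa [dist_zero_right] using hy, rfl⟩)
  · have := hR y hy.le
    simp only [zero_mul] at this
    exact (min_le_right _ _).trans this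

/-- `g` is continuous. -/
lemma g_cont (hg_lip : ∀ s : Set E, IsBounded s → ∃ K : NNReal, LipschitzOnWith K g s) :
    Continuous g := by
  rw [continuous_iff_continuousAt]
  intro x
  obtain ⟨K, hK⟩ := hg_lip (ball x 1) isBounded_ball
  exact (hK.continuousOn.continuousAt (ball_mem_nhds x one_pos))

lemma bddBelow_family (hg_nonneg : ∀ x, 0 ≤ g x) {m : ℝ} (hm : ∀ y, m ≤ W y)
    {h : ℝ} (hh : 0 ≤ h) (x : E) :
    BddBelow (Set.range fun y : E => g (x - h • y) + h * W y) := by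
  refine ⟨h * m, fun v ⟨y, hy⟩ => ?_⟩
  subst hy
  have : h * m ≤ h * W y := mul_le_mul_of_nonneg_left (hm y) hh
  have h2 := hg_nonneg (x - h • y)
  dsimp only
  linarith

end Basic

section Min

/-- Uniform minimizer bound: minimizers of the Hopf–Lax infimum stay in a fixed ball. -/
lemma MIN' {g W : E → ℝ} (hg_nonneg : ∀ x, 0 ≤ g x)
    (hg_lip : ∀ s : Set E, IsBounded s → ∃ K : NNReal, LipschitzOnWith K g s)
    (hW_conv : ConvexOn ℝ Set.univ W)
    (hW_super : Tendsto (fun x : E => W x / ‖x‖) (cocompact E) atTop)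
    {a b R : ℝ} (ha : 0 < a) (hab : a ≤ b) (hR : 0 ≤ R) :
    ∃ ρ : ℝ, 1 ≤ ρ ∧ ∀ h : ℝ, ∀ x : E, h ∈ Icc a b → ‖x‖ ≤ R →
      ∃ y' : E, ‖y'‖ ≤ ρ ∧ ∀ y : E, g (x - h • y') + h * W y' ≤ g (x - h • y) + h * W y := by
  -- bound for g on the ball of radius R
  obtain ⟨Kg, hKg⟩ := hg_lip (closedBall (0 : E) R) isBounded_closedBall
  set Mg : ℝ := g 0 + Kg * R with hMg
  have hgbd : ∀ x : E, ‖x‖ ≤ R → g x ≤ Mg := by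
    intro x hx
    have h0 : (0 : E) ∈ closedBall (0 : E) R := by simpa using hR
    have hxm : x ∈ closedBall (0 : E) R := by simpa [dist_zero_right] using hx
    have := hKg.dist_le_mul x hxm 0 h0
    rw [Real.dist_eq, dist_zero_right] at this
    have h1 : g x - g 0 ≤ Kg * ‖x‖ := (le_abs_self _).trans this
    have h2 : (Kg : ℝ) * ‖x‖ ≤ Kg * R := mul_le_mul_of_nonneg_left hx Kg.2
    simp only [hMg]; linarith
  set M : ℝ := Mg + b * |W 0| with hM
  have hval0 : ∀ h : ℝ, ∀ x : E, h ∈ Icc a b → ‖x‖ ≤ R → g (x - h • 0) + h * W 0 ≤ M := by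
    intro h x hh hx
    have h1 : g (x - h • 0) ≤ Mg := by simpa using hgbd x hx
    have h2 : h * W 0 ≤ b * |W 0| := by
      rcases le_or_gt 0 (W 0) with h3 | h3
      · have := mul_le_mul_of_nonneg_right hh.2 h3
        rwa [abs_of_nonneg h3]
      · nlinarith [hh.1, ha, abs_nonneg (W 0)]
    simp only [hM]; linarith
  have hM0 : 0 ≤ Mg := le_trans (hg_nonneg 0) (hgbd 0 (by simpa using hR))
  have hMpos : 0 < M + 1 := by nlinarith [abs_nonneg (W 0)]
  obtain ⟨R₁, hR₁1, hR₁⟩ := growth hW_super ((M + 1) / a)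
  set ρ : ℝ := max R₁ 1 with hρ
  refine ⟨ρ, le_max_right _ _, fun h x hh hx => ?_⟩
  have hcont : Continuous fun y : E => g (x - h • y) + h * W y := by
    exact ((g_cont hg_lip).comp (continuous_const.sub (continuous_id.const_smul h))).add
      (continuous_const.mul (W_cont hW_conv))
  obtain ⟨y', hy'mem, hy'min⟩ := (isCompact_closedBall (0 : E) ρ).exists_isMinOn
    (Metric.nonempty_closedBall.2 (by positivity)) hcont.continuousOn
  have hy'ball : ‖y'‖ ≤ ρ := by simpa [dist_zero_right] using hy'mem
  refine ⟨y', hy'ball, fun y => ?_⟩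
  rcases le_or_gt ‖y‖ ρ with hyρ | hyρ
  · exact hy'min (by simpa [dist_zero_right] using hyρ)
  · -- outside the ball the value exceeds M, while `y' = 0` gives at most `M`
    have hy1 : (1 : ℝ) ≤ ‖y‖ := le_trans (le_max_right _ _) hyρ.le
    have hWy : (M + 1) / a * ‖y‖ ≤ W y := hR₁ y (le_trans (le_max_left _ _) hyρ.le)
    have hWy' : (M + 1) / a ≤ W y := by nlinarith [div_nonneg hMpos.le ha.le]
    have hhW : M + 1 ≤ h * W y := by
      have hWypos : 0 < W y := lt_of_lt_of_le (by positivity) hWy'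
      have h1 : a * W y ≤ h * W y := mul_le_mul_of_nonneg_right hh.1 hWypos.le
      rw [div_le_iff₀ ha] at hWy'
      nlinarith
    have h0ball : (0 : E) ∈ closedBall (0 : E) ρ := by
      simpa using (by positivity : (0:ℝ) ≤ ρ)
    calc g (x - h • y') + h * W y' ≤ g (x - h • 0) + h * W 0 := hy'min h0ball
      _ ≤ M := hval0 h x hh hx
      _ ≤ g (x - h • y) + h * W y := by linarith [hg_nonneg (x - h • y)]

/-- Pointwise: the infimum is attained, and equals `QQ`. -/
lemma MINpt {g W : E → ℝ} (hg_nonneg : ∀ x, 0 ≤ g x)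
    (hg_lip : ∀ s : Set E, IsBounded s → ∃ K : NNReal, LipschitzOnWith K g s)
    (hW_conv : ConvexOn ℝ Set.univ W)
    (hW_super : Tendsto (fun x : E => W x / ‖x‖) (cocompact E) atTop)
    {h : ℝ} (hh : 0 < h) (x : E) :
    ∃ y' : E, QQ g W (h, x) = g (x - h • y') + h * W y' ∧
      ∀ y : E, g (x - h • y') + h * W y' ≤ g (x - h • y) + h * W y := by
  obtain ⟨m, hm0, hm⟩ := W_lb hW_conv hW_super
  obtain ⟨ρ, -, hmin⟩ := MIN' hg_nonneg hg_lip hW_conv hW_super hh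
    (le_refl h) (norm_nonneg x)
  obtain ⟨y', -, hy'⟩ := hmin h x (by simp) (le_refl _)
  refine ⟨y', le_antisymm ?_ ?_, hy'⟩
  · exact ciInf_le (bddBelow_family hg_nonneg hm hh.le x) y'
  · exact le_ciInf hy'

end Min

section Lip

/-- `QQ g W` is Lipschitz on boxes `[a,b] × closedBall 0 R` with `0 < a`. -/
lemma LIP {g W : E → ℝ} (hg_nonneg : ∀ x, 0 ≤ g x)
    (hg_lip : ∀ s : Set E, IsBounded s → ∃ K : NNReal, LipschitzOnWith K g s)
    (hW_conv : ConvexOn ℝ Set.univ W)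
    (hW_super : Tendsto (fun x : E => W x / ‖x‖) (cocompact E) atTop)
    {a b R : ℝ} (ha : 0 < a) (hab : a ≤ b) (hR : 0 ≤ R) :
    ∃ K : NNReal, LipschitzOnWith K (QQ g W) (Icc a b ×ˢ closedBall (0 : E) R) := by
  obtain ⟨m, hm0, hm⟩ := W_lb hW_conv hW_super
  obtain ⟨ρ, hρ1, hmin⟩ := MIN' hg_nonneg hg_lip hW_conv hW_super ha hab hR
  have hρ0 : (0:ℝ) ≤ ρ := zero_le_one.trans hρ1
  obtain ⟨Kg, hKg⟩ := hg_lip (closedBall (0:E) (R + b * ρ)) isBounded_closedBall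
  obtain ⟨MW, hMW⟩ := (isCompact_closedBall (0:E) ρ).exists_bound_of_continuousOn
    (W_cont hW_conv).continuousOn
  set C : ℝ := Kg * (1 + ρ) + MW with hC
  have key : ∀ p q : ℝ × E, p ∈ Icc a b ×ˢ closedBall (0:E) R →
      q ∈ Icc a b ×ˢ closedBall (0:E) R → QQ g W p - QQ g W q ≤ C * dist p q := by
    intro p q hp hq
    obtain ⟨hp1, hp2⟩ := hp
    obtain ⟨hq1, hq2⟩ := hq
    rw [mem_closedBall, dist_zero_right] at hp2 hq2
    obtain ⟨y₀, hy₀ρ, hy₀min⟩ := hmin q.1 q.2 hq1 hq2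
    have hq_val : QQ g W q = g (q.2 - q.1 • y₀) + q.1 * W y₀ :=
      le_antisymm (ciInf_le (bddBelow_family hg_nonneg hm (ha.le.trans hq1.1) q.2) y₀)
        (le_ciInf hy₀min)
    have hp_le : QQ g W p ≤ g (p.2 - p.1 • y₀) + p.1 * W y₀ :=
      ciInf_le (bddBelow_family hg_nonneg hm (ha.le.trans hp1.1) p.2) y₀
    have hd1 : dist p.1 q.1 ≤ dist p q := by
      rw [Prod.dist_eq]; exact le_max_left _ _
    have hd2 : dist p.2 q.2 ≤ dist p q := by
      rw [Prod.dist_eq]; exact le_max_right _ _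
    have hmemp : p.2 - p.1 • y₀ ∈ closedBall (0:E) (R + b * ρ) := by
      rw [mem_closedBall, dist_zero_right]
      calc ‖p.2 - p.1 • y₀‖ ≤ ‖p.2‖ + ‖p.1 • y₀‖ := norm_sub_le _ _
        _ ≤ R + b * ρ := by
          rw [norm_smul, Real.norm_eq_abs, abs_of_nonneg (ha.le.trans hp1.1)]
          have : p.1 * ‖y₀‖ ≤ b * ρ := by
            apply mul_le_mul hp1.2 hy₀ρ (norm_nonneg _) (ha.le.trans hab)
          linarith
    have hmemq : q.2 - q.1 • y₀ ∈ closedBall (0:E) (R + b * ρ) := by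
      rw [mem_closedBall, dist_zero_right]
      calc ‖q.2 - q.1 • y₀‖ ≤ ‖q.2‖ + ‖q.1 • y₀‖ := norm_sub_le _ _
        _ ≤ R + b * ρ := by
          rw [norm_smul, Real.norm_eq_abs, abs_of_nonneg (ha.le.trans hq1.1)]
          have : q.1 * ‖y₀‖ ≤ b * ρ := by
            apply mul_le_mul hq1.2 hy₀ρ (norm_nonneg _) (ha.le.trans hab)
          linarith
    have hargs : ‖(p.2 - p.1 • y₀) - (q.2 - q.1 • y₀)‖ ≤ (1 + ρ) * dist p q := by
      have heq : (p.2 - p.1 • y₀) - (q.2 - q.1 • y₀) = (p.2 - q.2) - (p.1 - q.1) • y₀ := by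
        rw [sub_smul]; abel
      rw [heq]
      calc ‖(p.2 - q.2) - (p.1 - q.1) • y₀‖ ≤ ‖p.2 - q.2‖ + ‖(p.1 - q.1) • y₀‖ :=
            norm_sub_le _ _
        _ ≤ dist p q + dist p q * ρ := by
          rw [norm_smul, Real.norm_eq_abs]
          have h1 : ‖p.2 - q.2‖ ≤ dist p q := by rwa [← dist_eq_norm]
          have h2 : |p.1 - q.1| * ‖y₀‖ ≤ dist p q * ρ := by
            apply mul_le_mul _ hy₀ρ (norm_nonneg _) dist_nonneg
            rwa [← Real.dist_eq]
          linarith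
        _ = (1 + ρ) * dist p q := by ring
    have hgdiff : g (p.2 - p.1 • y₀) - g (q.2 - q.1 • y₀) ≤ Kg * ((1 + ρ) * dist p q) := by
      have := hKg.dist_le_mul _ hmemp _ hmemq
      rw [Real.dist_eq, dist_eq_norm] at this
      have h1 := (le_abs_self (g (p.2 - p.1 • y₀) - g (q.2 - q.1 • y₀))).trans this
      have h2 : (Kg:ℝ) * ‖(p.2 - p.1 • y₀) - (q.2 - q.1 • y₀)‖ ≤ Kg * ((1 + ρ) * dist p q) :=
        mul_le_mul_of_nonneg_left hargs Kg.2
      linarith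
    have hWdiff : p.1 * W y₀ - q.1 * W y₀ ≤ MW * dist p q := by
      have h1 : |W y₀| ≤ MW := by
        have := hMW y₀ (by rwa [mem_closedBall, dist_zero_right])
        simpa using this
      have h2 : p.1 * W y₀ - q.1 * W y₀ = (p.1 - q.1) * W y₀ := by ring
      rw [h2]
      calc (p.1 - q.1) * W y₀ ≤ |(p.1 - q.1) * W y₀| := le_abs_self _
        _ = |p.1 - q.1| * |W y₀| := abs_mul _ _
        _ ≤ dist p q * MW := by
          apply mul_le_mul _ h1 (abs_nonneg _) dist_nonneg
          rwa [← Real.dist_eq]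
        _ = MW * dist p q := mul_comm _ _
    calc QQ g W p - QQ g W q ≤ (g (p.2 - p.1 • y₀) + p.1 * W y₀)
          - (g (q.2 - q.1 • y₀) + q.1 * W y₀) := by rw [hq_val]; linarith
      _ ≤ Kg * ((1 + ρ) * dist p q) + MW * dist p q := by linarith
      _ = C * dist p q := by rw [hC]; ring
  refine ⟨C.toNNReal, ?_⟩
  rw [lipschitzOnWith_iff_dist_le_mul]
  intro p hp q hq
  have h1 := key p q hp hq
  have h2 := key q p hq hp
  rw [dist_comm q p] at h2
  have habs : dist (QQ g W p) (QQ g W q) ≤ C * dist p q := by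
    rw [Real.dist_eq, abs_sub_le_iff]
    exact ⟨h1, h2⟩
  refine habs.trans (mul_le_mul_of_nonneg_right ?_ dist_nonneg)
  rw [Real.coe_toNNReal']
  exact le_max_left _ _

end Lip

section Sub

/-- Sub-inequality from convexity: `Q_{h+s} g (x + s q) ≤ Q_h g x + s W q`. -/
lemma subineq {g W : E → ℝ} (hg_nonneg : ∀ x, 0 ≤ g x)
    (hW_conv : ConvexOn ℝ Set.univ W) {m : ℝ} (hm : ∀ y, m ≤ W y)
    {h s : ℝ} (hh : 0 < h) (hs : 0 < s) (x q : E) :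
    QQ g W (h + s, x + s • q) ≤ QQ g W (h, x) + s * W q := by
  have ht : (0:ℝ) < h + s := by linarith
  have hbdd := bddBelow_family hg_nonneg hm ht.le (x + s • q)
  have hptwise : ∀ y : E, QQ g W (h + s, x + s • q) - s * W q ≤ g (x - h • y) + h * W y := by
    intro y
    set y' : E := (h / (h + s)) • y + (s / (h + s)) • q with hy'def
    have hy' : (h + s) • y' = h • y + s • q := by
      rw [hy'def, smul_add, smul_smul, smul_smul, mul_div_cancel₀ _ ht.ne',
        mul_div_cancel₀ _ ht.ne']
    have harg : (x + s • q) - (h + s) • y' = x - h • y := by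
      rw [hy']; abel
    have hconv : (h + s) * W y' ≤ h * W y + s * W q := by
      have h2 := hW_conv.2 (mem_univ y) (mem_univ q)
        (by positivity : (0:ℝ) ≤ h / (h + s)) (by positivity : (0:ℝ) ≤ s / (h + s))
        (by field_simp)
      have h3 := mul_le_mul_of_nonneg_left h2 ht.le
      calc (h + s) * W y' ≤ (h + s) * (h / (h + s) * W y + s / (h + s) * W q) := h3
        _ = h * W y + s * W q := by field_simp
    have hle : QQ g W (h + s, x + s • q) ≤ g ((x + s • q) - (h + s) • y') + (h + s) * W y' :=
      ciInf_le hbdd y'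
    rw [harg] at hle
    linarith
  have h2 : QQ g W (h + s, x + s • q) - s * W q ≤ QQ g W (h, x) := le_ciInf hptwise
  linarith

end Sub

section Key

/-- At a point of differentiability of `QQ` with `h > 0`, the Hamilton–Jacobi equation holds. -/
lemma KEY {g W : E → ℝ} (hg_nonneg : ∀ x, 0 ≤ g x)
    (hg_lip : ∀ s : Set E, IsBounded s → ∃ K : NNReal, LipschitzOnWith K g s)
    (hW_conv : ConvexOn ℝ Set.univ W)
    (hW_super : Tendsto (fun x : E => W x / ‖x‖) (cocompact E) atTop)
    {p : ℝ × E} (hp : 0 < p.1) (hd : DifferentiableAt ℝ (QQ g W) p) :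
    ∃ (dh : ℝ) (dx : E),
      HasDerivAt (fun h : ℝ => ⨅ y : E, g (p.2 - h • y) + h * W y) dh p.1
      ∧ HasGradientAt (fun x : E => ⨅ y : E, g (x - p.1 • y) + p.1 * W y) dx p.2
      ∧ dh = -(⨆ y : E, (⟪y, dx⟫ : ℝ) - W y) := by
  obtain ⟨m, hm0, hm⟩ := W_lb hW_conv hW_super
  set L := fderiv ℝ (QQ g W) p with hLdef
  have hL : HasFDerivAt (QQ g W) L p := hd.hasFDerivAt
  set dx : E := (InnerProductSpace.toDual ℝ (EuclideanSpace ℝ (Fin n))).symm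
    (L.comp (ContinuousLinearMap.inr ℝ ℝ E)) with hdxdef
  set dh : ℝ := L (1, 0) with hdhdef
  -- the inner product of `dx` computes `L (0, y)`
  have hinner : ∀ y : E, (⟪y, dx⟫ : ℝ) = L (0, y) := by
    intro y
    rw [real_inner_comm]
    have h1 : (⟪dx, y⟫ : ℝ) = (InnerProductSpace.toDual ℝ (EuclideanSpace ℝ (Fin n))) dx y :=
      (InnerProductSpace.toDual_apply_apply).symm
    rw [h1, hdxdef, LinearIsometryEquiv.apply_symm_apply, ContinuousLinearMap.comp_apply,
      ContinuousLinearMap.inr_apply]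
  -- derivative in h
  have hDh : HasDerivAt (fun h : ℝ => QQ g W (h, p.2)) dh p.1 := by
    have h1 : HasDerivAt (fun h : ℝ => ((h, p.2) : ℝ × E)) ((1 : ℝ), (0 : E)) p.1 :=
      (hasDerivAt_id p.1).prodMk (hasDerivAt_const p.1 p.2)
    exact hL.comp_hasDerivAt p.1 h1
  -- gradient in x
  have hDx : HasGradientAt (fun x : E => QQ g W (p.1, x)) dx p.2 := by
    have h1 : HasFDerivAt (fun x : E => ((p.1, x) : ℝ × E))
        (ContinuousLinearMap.inr ℝ ℝ E) p.2 :=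
      (hasFDerivAt_const p.1 p.2).prodMk (hasFDerivAt_id p.2)
    have h2 : HasFDerivAt (fun x : E => QQ g W (p.1, x))
        (L.comp (ContinuousLinearMap.inr ℝ ℝ E)) p.2 := by
      have h3 := (hL : HasFDerivAt (QQ g W) L (p.1, p.2)).comp p.2 h1
      exact h3
    rw [hdxdef]
    exact h2.hasGradientAt
  -- directional derivatives
  have hdir : ∀ w : ℝ × E, HasDerivAt (fun t : ℝ => QQ g W (p + t • w)) (L w) 0 := by
    intro w
    have h3 : HasDerivAt (fun t : ℝ => p + t • w) w 0 := by
      simpa using ((hasDerivAt_id (0 : ℝ)).smul_const w).const_add p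
    have hL' : HasFDerivAt (QQ g W) L (p + (0 : ℝ) • w) := by simpa using hL
    exact hL'.comp_hasDerivAt 0 h3
  -- one-sided derivative bounds via slopes
  have hslope_le : ∀ (w : ℝ × E) (c : ℝ),
      (∀ᶠ t in 𝓝[>] (0:ℝ), QQ g W (p + t • w) - QQ g W p ≤ t * c) → L w ≤ c := by
    intro w c hev
    have h1 : Tendsto (slope (fun t : ℝ => QQ g W (p + t • w)) 0) (𝓝[>] (0:ℝ)) (𝓝 (L w)) :=
      (hasDerivAt_iff_tendsto_slope.1 (hdir w)).mono_left
        (nhdsWithin_mono 0 fun t ht => ne_of_gt ht)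
    refine le_of_tendsto h1 ?_
    filter_upwards [hev, self_mem_nhdsWithin] with t hle ht
    have ht' : (0:ℝ) < t := ht
    rw [slope_def_field]
    rw [div_le_iff₀ (by simpa using ht')]
    simpa [mul_comm] using hle
  -- upper bound : for all q, dh + L(0,q) ≤ W q
  have hupper : ∀ q : E, (⟪q, dx⟫ : ℝ) - W q ≤ -dh := by
    intro q
    have h1 : L ((1 : ℝ), q) ≤ W q := by
      apply hslope_le ((1:ℝ), q) (W q)
      filter_upwards [self_mem_nhdsWithin] with t ht
      have ht' : (0:ℝ) < t := ht
      have heq : p + t • ((1:ℝ), q) = (p.1 + t, p.2 + t • q) := by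
        simp [Prod.ext_iff]
      rw [heq]
      have := subineq hg_nonneg hW_conv hm hp ht' p.2 q
      linarith [this, mul_comm t (W q)]
    have h2 : L ((1:ℝ), q) = dh + L (0, q) := by
      rw [hdhdef, ← ContinuousLinearMap.map_add]
      norm_num
    rw [hinner]
    linarith [h1, h2.symm.le]
  -- lower bound at the minimizer
  obtain ⟨ys, hys_val, hys_min⟩ := MINpt hg_nonneg hg_lip hW_conv hW_super hp p.2
  have hlower : -dh ≤ (⟪ys, dx⟫ : ℝ) - W ys := by
    have h1 : L ((-1 : ℝ), -ys) ≤ -W ys := by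
      apply hslope_le ((-1:ℝ), -ys) (-W ys)
      filter_upwards [Ioo_mem_nhdsGT hp] with t ht
      obtain ⟨ht0, htp⟩ := ht
      have heq : p + t • ((-1:ℝ), -ys) = (p.1 - t, p.2 - t • ys) := by
        simp [Prod.ext_iff, sub_eq_add_neg]
      rw [heq]
      have hb2 := bddBelow_family hg_nonneg hm (by linarith : (0:ℝ) ≤ p.1 - t) (p.2 - t • ys)
      have h3 : QQ g W (p.1 - t, p.2 - t • ys)
          ≤ g ((p.2 - t • ys) - (p.1 - t) • ys) + (p.1 - t) * W ys := ciInf_le hb2 ys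
      have h4 : (p.2 - t • ys) - (p.1 - t) • ys = p.2 - p.1 • ys := by
        rw [sub_smul]; abel
      rw [h4] at h3
      have h5 : QQ g W p = g (p.2 - p.1 • ys) + p.1 * W ys := hys_val
      nlinarith [h3, h5]
    have h2 : L ((-1:ℝ), -ys) = -(dh + L (0, ys)) := by
      have : ((-1:ℝ), -ys) = -(((1:ℝ), (0:E)) + ((0:ℝ), ys)) := by
        simp [Prod.ext_iff]
      rw [this, ContinuousLinearMap.map_neg, ContinuousLinearMap.map_add, hdhdef]
    rw [hinner]
    rw [h2] at h1
    linarith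
  -- conclude
  have hbdd : BddAbove (Set.range fun y : E => (⟪y, dx⟫ : ℝ) - W y) :=
    ⟨-dh, fun v ⟨y, hy⟩ => hy ▸ hupper y⟩
  have hsup : (⨆ y : E, (⟪y, dx⟫ : ℝ) - W y) = -dh := by
    refine le_antisymm (ciSup_le hupper) (hlower.trans (le_ciSup hbdd ys))
  exact ⟨dh, dx, hDh, hDx, by rw [hsup, neg_neg]⟩

end Key

end QHJ


open QHJ in
theorem Q_hamilton_jacobi_aux (n : ℕ) (g W : EuclideanSpace ℝ (Fin n) → ℝ)
    (hg_nonneg : ∀ x, 0 ≤ g x)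
    (hg_lip : ∀ s : Set (EuclideanSpace ℝ (Fin n)), IsBounded s →
      ∃ K : NNReal, LipschitzOnWith K g s)
    (hW_conv : ConvexOn ℝ Set.univ W)
    (hW_super : Tendsto (fun x => W x / ‖x‖) (cocompact (EuclideanSpace ℝ (Fin n))) atTop) :
    ∀ᵐ p : ℝ × EuclideanSpace ℝ (Fin n), 0 < p.1 →
      ∃ (dh : ℝ) (dx : EuclideanSpace ℝ (Fin n)),
        HasDerivAt (fun h : ℝ =>
            ⨅ y : EuclideanSpace ℝ (Fin n), g (p.2 - h • y) + h * W y) dh p.1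
        ∧ HasGradientAt (fun x : EuclideanSpace ℝ (Fin n) =>
            ⨅ y : EuclideanSpace ℝ (Fin n), g (x - p.1 • y) + p.1 * W y) dx p.2
        ∧ dh = -(⨆ y : EuclideanSpace ℝ (Fin n), (⟪y, dx⟫ : ℝ) - W y) := by
  haveI : (volume : Measure (ℝ × EuclideanSpace ℝ (Fin n))).IsAddHaarMeasure :=
    inferInstanceAs (((volume : Measure ℝ).prod
      (volume : Measure (EuclideanSpace ℝ (Fin n)))).IsAddHaarMeasure)
  -- open boxes covering `(0,∞) × ℝⁿ`
  set T : ℕ → Set (ℝ × EuclideanSpace ℝ (Fin n)) :=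
    fun k => Ioo ((k + 1 : ℝ)⁻¹) (k + 1) ×ˢ ball (0 : EuclideanSpace ℝ (Fin n)) (k + 1)
    with hT
  have hTopen : ∀ k, IsOpen (T k) := fun k => isOpen_Ioo.prod isOpen_ball
  -- a.e. differentiability on each box, by Rademacher
  have hae : ∀ k : ℕ, ∀ᵐ p : ℝ × EuclideanSpace ℝ (Fin n),
      p ∈ T k → DifferentiableWithinAt ℝ (QQ g W) (T k) p := by
    intro k
    have hk1 : (0:ℝ) < (k + 1 : ℝ)⁻¹ := by positivity
    have hone : (1:ℝ) ≤ (k:ℝ) + 1 := by nlinarith [Nat.cast_nonneg (α := ℝ) k]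
    have hk2 : ((k:ℝ) + 1)⁻¹ ≤ (k:ℝ) + 1 := by
      have h1 : ((k:ℝ) + 1)⁻¹ ≤ 1 := by
        rw [inv_le_one_iff₀]; right; exact hone
      linarith
    obtain ⟨K, hK⟩ := LIP hg_nonneg hg_lip hW_conv hW_super hk1 hk2
      (by positivity : (0:ℝ) ≤ (k:ℝ) + 1)
    have hsub : T k ⊆ Icc ((k + 1 : ℝ)⁻¹) ((k:ℝ) + 1) ×ˢ
        closedBall (0 : EuclideanSpace ℝ (Fin n)) ((k:ℝ) + 1) := by
      intro p hp
      obtain ⟨h1, h2⟩ := hp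
      exact ⟨⟨h1.1.le, h1.2.le⟩, ball_subset_closedBall h2⟩
    exact (hK.mono hsub).ae_differentiableWithinAt_of_mem
  rw [← ae_all_iff] at hae
  filter_upwards [hae] with p hdiff hp
  -- find a box containing `p`
  obtain ⟨k, hk⟩ := exists_nat_gt (max p.1⁻¹ (max p.1 ‖p.2‖))
  have hk1 : p.1⁻¹ < (k:ℝ) + 1 := by
    have := (le_max_left p.1⁻¹ _).trans_lt hk; linarith
  have hk2 : p.1 < (k:ℝ) + 1 := by
    have := ((le_max_left p.1 _).trans (le_max_right _ _)).trans_lt hk; linarith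
  have hk3 : ‖p.2‖ < (k:ℝ) + 1 := by
    have := ((le_max_right p.1 _).trans (le_max_right _ _)).trans_lt hk; linarith
  have hpT : p ∈ T k := by
    refine ⟨⟨?_, hk2⟩, by simpa [mem_ball, dist_zero_right] using hk3⟩
    exact inv_lt_of_inv_lt₀ hp hk1
  have hdAt : DifferentiableAt ℝ (QQ g W) p :=
    (hdiff k hpT).differentiableAt ((hTopen k).mem_nhds hpT)
  exact KEY hg_nonneg hg_lip hW_conv hW_super hp hdAt

end Aux

/-- Hamilton–Jacobi equation: for `g` nonnegative locally Lipschitz and `W`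
convex with superlinear growth, for a.e. `(h,x) ∈ (0,∞) × ℝⁿ` the map `Q_h^W(g)` is
differentiable in `h` and in `x` and `∂_h Q_h^W(g)(x) = -W*(∇_x Q_h^W(g)(x))`. -/
theorem Q_hamilton_jacobi (n : ℕ) (g W : EuclideanSpace ℝ (Fin n) → ℝ)
    (hg_nonneg : ∀ x, 0 ≤ g x)
    (hg_lip : ∀ s : Set (EuclideanSpace ℝ (Fin n)), IsBounded s →
      ∃ K : NNReal, LipschitzOnWith K g s)
    (hW_conv : ConvexOn ℝ Set.univ W)
    (hW_super : Tendsto (fun x => W x / ‖x‖) (cocompact (EuclideanSpace ℝ (Fin n))) atTop) :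
    ∀ᵐ p : ℝ × EuclideanSpace ℝ (Fin n), 0 < p.1 →
      ∃ (dh : ℝ) (dx : EuclideanSpace ℝ (Fin n)),
        HasDerivAt (fun h : ℝ =>
            ⨅ y : EuclideanSpace ℝ (Fin n), g (p.2 - h • y) + h * W y) dh p.1
        ∧ HasGradientAt (fun x : EuclideanSpace ℝ (Fin n) =>
            ⨅ y : EuclideanSpace ℝ (Fin n), g (x - p.1 • y) + p.1 * W y) dx p.2
        ∧ dh = -(⨆ y : EuclideanSpace ℝ (Fin n), (⟪y, dx⟫ : ℝ) - W y) := by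
  exact Q_hamilton_jacobi_aux n g W hg_nonneg hg_lip hW_conv hW_super
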